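/- Let n, m be positive natural numbers and let 𝓔 : Matrix (Fin n) (Fin n) ℂ →ₗ[ℂ] Matrix (Fin m) (Fin m) ℂ be a linear map that is completely positive, in the sense that for every k ∈ ℕ and every positive semidefinite X ∈ Matrix (Fin k × Fin n) (Fin k × Fin n) ℂ, the matrix with entries ((i,p),(j,q)) ↦ (𝓔(X block (i,j)))_{p,q} is positive semidefinite, where X block (i,j) ∈ Matrix (Fin n) (Fin n) ℂ has entries (a,b) ↦ X_{(i,a),(j,b)}. Then there exists a family of matrices E_1, …, E_{n·m} ∈ Matrix (Fin m) (Fin n) ℂ such that 𝓔(A) = ∑_i E_i A E_i† for all A ∈ Matrix (Fin n) (Fin n) ℂ. If moreover trace(𝓔(ρ)) ≤ trace(ρ) for every positive semidefinite ρ, then this family satisfies: 1_n − ∑_i E_i† E_i is positive semidefinite. -/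

import Mathlib

open Matrix ComplexOrder

/-- Choi–Kraus theorem: every completely positive linear map
`𝓔 : Matrix (Fin n) (Fin n) ℂ → Matrix (Fin m) (Fin m) ℂ` admits a Kraus
decomposition with `n·m` Kraus operators, and if `𝓔` is moreover
trace-nonincreasing on states then the Kraus family satisfies
`∑ i, E iᴴ * E i ≤ 1`. -/
theorem choi_kraus
    (n m : ℕ) (hn : 0 < n) (hm : 0 < m)
    (𝓔 : Matrix (Fin n) (Fin n) ℂ →ₗ[ℂ] Matrix (Fin m) (Fin m) ℂ)
    (hCP : ∀ (k : ℕ) (X : Matrix (Fin k × Fin n) (Fin k × Fin n) ℂ), X.PosSemidef →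
        (Matrix.of (fun ip jq : Fin k × Fin m =>
          (𝓔 (Matrix.of fun a b => X (ip.1, a) (jq.1, b))) ip.2 jq.2)).PosSemidef) :
    ∃ E : Fin (n * m) → Matrix (Fin m) (Fin n) ℂ,
      (∀ A, 𝓔 A = ∑ i, E i * A * (E i)ᴴ) ∧
      ((∀ ρ : Matrix (Fin n) (Fin n) ℂ, ρ.PosSemidef → (𝓔 ρ).trace ≤ ρ.trace) →
        ((1 : Matrix (Fin n) (Fin n) ℂ) - ∑ i, (E i)ᴴ * E i).PosSemidef) := by
  classical
  -- the maximally entangled (unnormalized) state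
  set w : Matrix (Fin 1) (Fin n × Fin n) ℂ :=
    Matrix.of fun _ p => if p.1 = p.2 then (1:ℂ) else 0 with hw
  set X : Matrix (Fin n × Fin n) (Fin n × Fin n) ℂ := wᴴ * w with hX
  have hXpsd : X.PosSemidef := posSemidef_conjTranspose_mul_self _
  have hblock : ∀ i j : Fin n,
      (Matrix.of fun a b => X (i,a) (j,b)) = Matrix.single i j (1:ℂ) := by
    intro i j; ext a b
    simp only [Matrix.of_apply, hX, hw, Matrix.mul_apply, conjTranspose_apply,
      Fin.sum_univ_one, Matrix.of_apply, Matrix.single]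
    by_cases hia : i = a <;> by_cases hjb : j = b <;>
      simp [hia, hjb]
  have hC := hCP n X hXpsd
  obtain ⟨B, hB⟩ : ∃ B : Matrix (Fin n × Fin m) (Fin n × Fin m) ℂ, _ = Bᴴ * B := by
    open scoped MatrixOrder in
    exact CStarAlgebra.nonneg_iff_eq_star_mul_self.mp hC.nonneg
  -- key scalar identity
  have key : ∀ (a b : Fin n) (p q : Fin m),
      (𝓔 (Matrix.single a b 1)) p q
        = ∑ s : Fin n × Fin m, star (B s (a,p)) * B s (b,q) := by
    intro a b p q
    have h1 : (Matrix.of (fun ip jq : Fin n × Fin m =>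
        (𝓔 (Matrix.of fun x y => X (ip.1, x) (jq.1, y))) ip.2 jq.2)) (a,p) (b,q)
        = (Bᴴ * B) (a,p) (b,q) := by rw [← hB]
    simpa [Matrix.mul_apply, hblock] using h1
  set F : (Fin n × Fin m) → Matrix (Fin m) (Fin n) ℂ :=
    fun s => Matrix.of fun p a => star (B s (a, p)) with hF
  have hE : ∀ A, 𝓔 A = ∑ i : Fin (n * m),
      F (finProdFinEquiv.symm i) * A * (F (finProdFinEquiv.symm i))ᴴ := by
    intro A
    have hA : 𝓔 A = ∑ a : Fin n, ∑ b : Fin n, A a b • 𝓔 (Matrix.single a b 1) := by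
      conv_lhs => rw [matrix_eq_sum_single A]
      rw [map_sum]
      refine Finset.sum_congr rfl fun a _ => ?_
      rw [map_sum]
      refine Finset.sum_congr rfl fun b _ => ?_
      rw [← _root_.map_smul]
      congr 1
      rw [smul_single, smul_eq_mul, mul_one]
    have hsum : ∀ (f : (Fin n × Fin m) → Matrix (Fin m) (Fin m) ℂ),
        ∑ i : Fin (n * m), f (finProdFinEquiv.symm i) = ∑ s, f s :=
      fun f => Equiv.sum_comp finProdFinEquiv.symm f
    rw [hA, hsum (fun s => F s * A * (F s)ᴴ)]
    ext p q
    simp only [Matrix.sum_apply, Matrix.smul_apply, smul_eq_mul, Matrix.mul_apply,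
      conjTranspose_apply, hF, Matrix.of_apply, key, star_star]
    rw [Finset.sum_comm]
    conv_rhs => rw [Finset.sum_comm]
    refine Finset.sum_congr rfl fun b _ => ?_
    simp only [Finset.mul_sum, Finset.sum_mul]
    rw [Finset.sum_comm]
    exact Finset.sum_congr rfl fun s _ => Finset.sum_congr rfl fun a _ => by ring
  refine ⟨fun i => F (finProdFinEquiv.symm i), hE, ?_⟩
  · intro h
    set S : Matrix (Fin n) (Fin n) ℂ :=
      ∑ i : Fin (n * m), (F (finProdFinEquiv.symm i))ᴴ * F (finProdFinEquiv.symm i) with hS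
    refine posSemidef_iff_dotProduct_mulVec.mpr ⟨?_, ?_⟩
    · refine IsHermitian.sub isHermitian_one ?_
      rw [IsHermitian, conjTranspose_sum]
      exact Finset.sum_congr rfl fun i _ => (isHermitian_conjTranspose_mul_self _)
    · intro x
      set ρ : Matrix (Fin n) (Fin n) ℂ := vecMulVec x (star x) with hρdef
      have hρ : ρ.PosSemidef := by
        have : ρ = (Matrix.of fun (_ : Fin 1) a => star (x a))ᴴ *
            (Matrix.of fun (_ : Fin 1) a => star (x a)) := by
          ext a b
          simp [hρdef, vecMulVec, Matrix.mul_apply, Fin.sum_univ_one]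
        rw [this]; exact posSemidef_conjTranspose_mul_self _
      have htr : (𝓔 ρ).trace ≤ ρ.trace := h ρ hρ
      have e2 : (𝓔 ρ).trace = (ρ * S).trace := by
        rw [hE ρ, trace_sum, hS, Finset.mul_sum, trace_sum]
        refine Finset.sum_congr rfl fun i _ => ?_
        rw [trace_mul_cycle, ← Matrix.mul_assoc, trace_mul_comm, ← Matrix.mul_assoc]
      have e1 : star x ⬝ᵥ ((1 : Matrix (Fin n) (Fin n) ℂ) - S) *ᵥ x
          = ρ.trace - (ρ * S).trace := by
        rw [sub_mulVec, dotProduct_sub, one_mulVec]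
        congr 1
        · simp [hρdef, trace, vecMulVec, dotProduct, diag, mul_comm]
        · simp only [dotProduct, mulVec, trace, diag, Matrix.mul_apply, hρdef,
            vecMulVec_apply, Pi.star_apply, Finset.mul_sum, Finset.sum_mul]
          rw [Finset.sum_comm]
          refine Finset.sum_congr rfl fun a _ => Finset.sum_congr rfl fun b _ => ?_
          ring
      rw [e1]
      rw [e2] at htr
      exact sub_nonneg.mpr htr
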